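/- (Semidefinite programming bound.) Let n ≥ 2, let t < 1, let B be a real number, let f₀ > 0, and let F : ℝ³ → ℝ be symmetric (invariant under all permutations of its three arguments). Suppose: (i) for every finite subset C of the unit sphere S^{n-1} ⊆ ℝⁿ one has Σ_{(c,c',c'') ∈ C³} F(⟨c,c'⟩, ⟨c,c''⟩, ⟨c',c''⟩) ≥ f₀ · |C|³; (ii) F(x,y,z) ≤ 0 for all (x,y,z) with −1 ≤ x,y,z ≤ t and 1 + 2xyz − x² − y² − z² ≥ 0; (iii) F(x,x,1) ≤ B for all x ∈ [−1, t]. Then every finite subset C of S^{n-1} of cardinality N in which any two distinct points have inner product at most t satisfies N ≤ (3B + √(9B² + 4f₀(F(1,1,1) − 3B)))/(2f₀). -/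

import Mathlib

open scoped RealInnerProductSpace

lemma gram3 {E : Type*} [NormedAddCommGroup E] [InnerProductSpace ℝ E]
    (u v w : E) (hu : ‖u‖ = 1) (hv : ‖v‖ = 1) (hw : ‖w‖ = 1) :
    0 ≤ 1 + 2 * ⟪u,v⟫ * ⟪u,w⟫ * ⟪v,w⟫ - ⟪u,v⟫^2 - ⟪u,w⟫^2 - ⟪v,w⟫^2 := by
  have huu : ⟪u,u⟫ = 1 := by rw [real_inner_self_eq_norm_sq, hu]; norm_num
  have hvv : ⟪v,v⟫ = 1 := by rw [real_inner_self_eq_norm_sq, hv]; norm_num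
  have hww : ⟪w,w⟫ = 1 := by rw [real_inner_self_eq_norm_sq, hw]; norm_num
  set x : ℝ := ⟪u,v⟫ with hx
  set y : ℝ := ⟪u,w⟫ with hy
  set z : ℝ := ⟪v,w⟫ with hz
  have key : ∀ α β : ℝ, 0 ≤ 1 + α^2 + β^2 - 2*α*y - 2*β*z + 2*α*β*x := by
    intro α β
    have h0 : (0:ℝ) ≤ ⟪w - α•u - β•v, w - α•u - β•v⟫ := real_inner_self_nonneg
    have e : ⟪w - α•u - β•v, w - α•u - β•v⟫ =
        1 + α^2 + β^2 - 2*α*y - 2*β*z + 2*α*β*x := by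
      simp only [inner_sub_left, inner_sub_right, real_inner_smul_left, real_inner_smul_right,
        huu, hvv, hww, hx, hy, hz, real_inner_comm v u, real_inner_comm w u, real_inner_comm w v]
      ring
    linarith [e ▸ h0]
  have hx2 : x^2 ≤ 1 := by
    have h := abs_real_inner_le_norm u v
    rw [hu, hv] at h
    nlinarith [abs_nonneg x, sq_abs x]
  have keyτ : ∀ τ : ℝ, 0 ≤ 1 - 2*τ*(y^2+z^2-2*x*y*z) + τ^2*(1-x^2)*(y^2+z^2-2*x*y*z) := by
    intro τ
    have h := key (τ*(y-x*z)) (τ*(z-x*y))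
    nlinarith [h]
  by_cases hm : y^2+z^2-2*x*y*z ≤ 0
  · nlinarith [hm, hx2]
  · push_neg at hm
    by_cases hs : 1 - x^2 = 0
    · exfalso
      have h := keyτ (1/(y^2+z^2-2*x*y*z))
      rw [hs] at h
      have hne : y^2+z^2-2*x*y*z ≠ 0 := ne_of_gt hm
      field_simp at h
      rw [zero_div, add_zero, mul_div_assoc, div_self (by intro h0; apply hne; linarith)] at h
      linarith
    · have hs' : 0 < 1 - x^2 := lt_of_le_of_ne (by linarith) (Ne.symm hs)
      have h := keyτ (1/(1-x^2))
      have e : 1 - 2*(1/(1-x^2))*(y^2+z^2-2*x*y*z) + (1/(1-x^2))^2*(1-x^2)*(y^2+z^2-2*x*y*z)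
          = 1 - (y^2+z^2-2*x*y*z)/(1-x^2) := by
        field_simp
        ring
      rw [e] at h
      have h2 : (y^2+z^2-2*x*y*z)/(1-x^2) ≤ 1 := by linarith
      rw [div_le_one hs'] at h2
      linarith

theorem semidefinite_programming_bound
    (n : ℕ) (hn : 2 ≤ n) (t : ℝ) (ht : t < 1)
    (B f₀ : ℝ) (hf₀ : 0 < f₀)
    (F : ℝ → ℝ → ℝ → ℝ)
    (hsymm : ∀ x y z : ℝ, F x y z = F y x z ∧ F x y z = F x z y)
    (hpos : ∀ C : Finset (EuclideanSpace ℝ (Fin n)), (∀ c ∈ C, ‖c‖ = 1) →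
      f₀ * (C.card : ℝ) ^ 3 ≤
        ∑ c ∈ C, ∑ c' ∈ C, ∑ c'' ∈ C, F ⟪c, c'⟫ ⟪c, c''⟫ ⟪c', c''⟫)
    (hD : ∀ x y z : ℝ, -1 ≤ x → x ≤ t → -1 ≤ y → y ≤ t → -1 ≤ z → z ≤ t →
      0 ≤ 1 + 2 * x * y * z - x ^ 2 - y ^ 2 - z ^ 2 → F x y z ≤ 0)
    (hB : ∀ x ∈ Set.Icc (-1 : ℝ) t, F x x 1 ≤ B)
    (C : Finset (EuclideanSpace ℝ (Fin n)))
    (hunit : ∀ c ∈ C, ‖c‖ = 1)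
    (hinner : ∀ c ∈ C, ∀ c' ∈ C, c ≠ c' → ⟪c, c'⟫ ≤ t) :
    (C.card : ℝ) ≤
      (3 * B + Real.sqrt (9 * B ^ 2 + 4 * f₀ * (F 1 1 1 - 3 * B))) / (2 * f₀) := by
  -- a unit vector exists
  have hn0 : 0 < n := by omega
  set e : EuclideanSpace ℝ (Fin n) := EuclideanSpace.single ⟨0, hn0⟩ (1:ℝ) with he
  have hne : ‖e‖ = 1 := by rw [he, EuclideanSpace.norm_single]; norm_num
  have hee : ⟪e,e⟫ = 1 := by rw [real_inner_self_eq_norm_sq, hne]; norm_num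
  classical
  have hF : f₀ ≤ F 1 1 1 := by
    have h := hpos {e} (by simp [hne])
    simp only [Finset.sum_singleton, Finset.card_singleton, Nat.cast_one, one_pow, mul_one] at h
    rwa [hee] at h
  have hD0 : 0 ≤ 9 * B ^ 2 + 4 * f₀ * (F 1 1 1 - 3 * B) := by
    nlinarith [sq_nonneg (3*B - 2*f₀)]
  have hsqnn : 0 ≤ Real.sqrt (9 * B ^ 2 + 4 * f₀ * (F 1 1 1 - 3 * B)) := Real.sqrt_nonneg _
  -- basic facts about C
  have hself : ∀ c ∈ C, ⟪c,c⟫ = (1:ℝ) := fun c hc => by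
    rw [real_inner_self_eq_norm_sq, hunit c hc]; norm_num
  have hIcc : ∀ c ∈ C, ∀ c' ∈ C, c ≠ c' → (⟪c,c'⟫ ∈ Set.Icc (-1:ℝ) t) := by
    intro c hc c' hc' hne'
    have h := abs_real_inner_le_norm c c'
    rw [hunit c hc, hunit c' hc'] at h
    rw [one_mul] at h
    exact ⟨(abs_le.mp h).1, hinner c hc c' hc' hne'⟩
  have hBc : ∀ c ∈ C, ∀ c' ∈ C, c ≠ c' → F ⟪c,c'⟫ ⟪c,c'⟫ 1 ≤ B := by
    intro c hc c' hc' hne'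
    exact hB _ (hIcc c hc c' hc' hne')
  rcases C.eq_empty_or_nonempty with rfl | hCne
  · simp only [Finset.card_empty, Nat.cast_zero]
    apply div_nonneg _ (by linarith)
    by_cases hb : 0 ≤ B
    · linarith
    · push_neg at hb
      have h9 : 9 * B ^ 2 ≤ 9 * B ^ 2 + 4 * f₀ * (F 1 1 1 - 3 * B) := by nlinarith
      have := Real.sqrt_le_sqrt h9
      have h3 : Real.sqrt (9 * B ^ 2) = -(3*B) := by
        rw [show (9:ℝ) * B ^ 2 = (3*B)^2 by ring, Real.sqrt_sq_eq_abs, abs_of_neg (by linarith)]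
      linarith
  · set N : ℝ := (C.card : ℝ) with hN
    have hN1 : 1 ≤ N := by
      rw [hN]
      exact_mod_cast Nat.one_le_iff_ne_zero.mpr (Finset.card_ne_zero_of_mem hCne.choose_spec)
    -- main sum bound
    have hsum : ∑ c ∈ C, ∑ c' ∈ C, ∑ c'' ∈ C, F ⟪c, c'⟫ ⟪c, c''⟫ ⟪c', c''⟫ ≤
        N * (F 1 1 1 + 3 * (N - 1) * B) := by
      have hcard : ∀ c ∈ C, ((C.erase c).card : ℝ) = N - 1 := by
        intro c hc
        rw [Finset.card_erase_of_mem hc, hN]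
        have : 1 ≤ C.card := Finset.card_pos.mpr hCne
        push_cast [Nat.cast_sub this]
        ring
      have hper : ∀ c ∈ C, ∑ c' ∈ C, ∑ c'' ∈ C, F ⟪c, c'⟫ ⟪c, c''⟫ ⟪c', c''⟫ ≤
          F 1 1 1 + 3 * (N - 1) * B := by
        intro c hc
        rw [← Finset.add_sum_erase C _ hc]
        -- first part: c' = c
        have part1 : ∑ c'' ∈ C, F ⟪c, c⟫ ⟪c, c''⟫ ⟪c, c''⟫ ≤ F 1 1 1 + (N - 1) * B := by
          rw [← Finset.add_sum_erase C _ hc, hself c hc]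
          have : ∑ c'' ∈ C.erase c, F 1 ⟪c, c''⟫ ⟪c, c''⟫ ≤ (N - 1) * B := by
            calc ∑ c'' ∈ C.erase c, F 1 ⟪c, c''⟫ ⟪c, c''⟫
                ≤ ∑ c'' ∈ C.erase c, B := by
                  apply Finset.sum_le_sum
                  intro c'' hc''
                  have hmem := Finset.mem_of_mem_erase hc''
                  have hnec : c ≠ c'' := (Finset.ne_of_mem_erase hc'').symm
                  have h1 := (hsymm 1 ⟪c,c''⟫ ⟪c,c''⟫).1
                  have h2 := (hsymm ⟪c,c''⟫ 1 ⟪c,c''⟫).2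
                  rw [h1, h2]
                  exact hBc c hc c'' hmem hnec
              _ = (N - 1) * B := by rw [Finset.sum_const, nsmul_eq_mul, hcard c hc]
          linarith
        -- second part: c' ≠ c
        have part2 : ∑ c' ∈ C.erase c, ∑ c'' ∈ C, F ⟪c, c'⟫ ⟪c, c''⟫ ⟪c', c''⟫ ≤
            (N - 1) * (2 * B) := by
          calc ∑ c' ∈ C.erase c, ∑ c'' ∈ C, F ⟪c, c'⟫ ⟪c, c''⟫ ⟪c', c''⟫
              ≤ ∑ c' ∈ C.erase c, (2 * B) := by
                apply Finset.sum_le_sum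
                intro c' hc'
                have hc'C := Finset.mem_of_mem_erase hc'
                have hne1 : c ≠ c' := (Finset.ne_of_mem_erase hc').symm
                have hc'e : c' ∈ C.erase c := hc'
                rw [← Finset.add_sum_erase C _ hc, ← Finset.add_sum_erase (C.erase c) _ hc'e]
                -- term c'' = c
                have t1 : F ⟪c, c'⟫ ⟪c, c⟫ ⟪c', c⟫ ≤ B := by
                  rw [hself c hc, real_inner_comm c' c, (hsymm ⟪c',c⟫ 1 ⟪c',c⟫).2]
                  exact hBc c' hc'C c hc (Ne.symm hne1)
                -- term c'' = c'
                have t2 : F ⟪c, c'⟫ ⟪c, c'⟫ ⟪c', c'⟫ ≤ B := by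
                  rw [hself c' hc'C]
                  exact hBc c hc c' hc'C hne1
                -- remaining terms
                have t3 : ∑ c'' ∈ (C.erase c).erase c', F ⟪c, c'⟫ ⟪c, c''⟫ ⟪c', c''⟫ ≤ 0 := by
                  apply Finset.sum_nonpos
                  intro c'' hc''
                  have hc''C : c'' ∈ C := Finset.mem_of_mem_erase (Finset.mem_of_mem_erase hc'')
                  have hne2 : c'' ≠ c' := Finset.ne_of_mem_erase hc''
                  have hne3 : c'' ≠ c := Finset.ne_of_mem_erase (Finset.mem_of_mem_erase hc'')
                  obtain ⟨hx1, hx2⟩ := hIcc c hc c' hc'C hne1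
                  obtain ⟨hy1, hy2⟩ := hIcc c hc c'' hc''C hne3.symm
                  obtain ⟨hz1, hz2⟩ := hIcc c' hc'C c'' hc''C hne2.symm
                  apply hD _ _ _ hx1 hx2 hy1 hy2 hz1 hz2
                  exact gram3 c c' c'' (hunit c hc) (hunit c' hc'C) (hunit c'' hc''C)
                linarith
            _ = (N - 1) * (2 * B) := by rw [Finset.sum_const, nsmul_eq_mul, hcard c hc]
        linarith
      calc ∑ c ∈ C, ∑ c' ∈ C, ∑ c'' ∈ C, F ⟪c, c'⟫ ⟪c, c''⟫ ⟪c', c''⟫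
          ≤ ∑ c ∈ C, (F 1 1 1 + 3 * (N - 1) * B) := Finset.sum_le_sum hper
        _ = N * (F 1 1 1 + 3 * (N - 1) * B) := by rw [Finset.sum_const, nsmul_eq_mul, hN]
    have hmain : f₀ * N ^ 3 ≤ N * (F 1 1 1 + 3 * (N - 1) * B) :=
      le_trans (hpos C hunit) hsum
    have hquad : f₀ * N ^ 2 ≤ F 1 1 1 + 3 * (N - 1) * B := by
      nlinarith [hmain, hN1]
    have hd : (2 * f₀ * N - 3 * B) ^ 2 ≤ 9 * B ^ 2 + 4 * f₀ * (F 1 1 1 - 3 * B) := by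
      nlinarith [mul_le_mul_of_nonneg_left hquad (by positivity : (0:ℝ) ≤ 4 * f₀)]
    have hsqrt : 2 * f₀ * N - 3 * B ≤ Real.sqrt (9 * B ^ 2 + 4 * f₀ * (F 1 1 1 - 3 * B)) := by
      calc 2 * f₀ * N - 3 * B ≤ |2 * f₀ * N - 3 * B| := le_abs_self _
        _ = Real.sqrt ((2 * f₀ * N - 3 * B) ^ 2) := (Real.sqrt_sq_eq_abs _).symm
        _ ≤ _ := Real.sqrt_le_sqrt hd
    rw [le_div_iff₀ (by positivity)]
    linarith
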